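/- arXiv:math/9902043 — 3 statements merged into one kernel-verified Lean document; each statement's English description precedes it below -/
import Mathlib

section
/- There exists a constant c > 0 such that for all sufficiently large n, the expectation μ_n of the minimum triangle area A satisfies μ_n > c/n³. -/
open MeasureTheory Set
open scoped ENNReal

/-- Area of the triangle with vertices `P`, `Q`, `R` in the plane:
`½ · |det (Q - P, R - P)|`. -/
noncomputable def triArea (P Q R : ℝ × ℝ) : ℝ :=
  |(Q.1 - P.1) * (R.2 - P.2) - (Q.2 - P.2) * (R.1 - P.1)| / 2

/-- Minimum area of a triangle formed by three of the points `x 0, …, x (n-1)`. -/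
noncomputable def minTriArea (n : ℕ) (x : Fin n → ℝ × ℝ) : ℝ :=
  sInf {a | ∃ i j k : Fin n, i < j ∧ j < k ∧ a = triArea (x i) (x j) (x k)}

/-- Uniform probability measure on the unit square `[0,1]²`. -/
noncomputable def unifSq : Measure (ℝ × ℝ) :=
  volume.restrict (Set.Icc ((0, 0) : ℝ × ℝ) (1, 1))

/-- Joint distribution of `n` points chosen independently and uniformly in `[0,1]²`. -/
noncomputable def μpts (n : ℕ) : Measure (Fin n → ℝ × ℝ) :=
  Measure.pi fun _ => unifSq

noncomputable def muI : Measure ℝ := volume.restrict (Set.Icc (0:ℝ) 1)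

instance : IsProbabilityMeasure muI :=
  ⟨by simp [muI, Real.volume_Icc]⟩

lemma unifSq_eq : unifSq = muI.prod muI := by
  rw [muI, Measure.prod_restrict, ← Measure.volume_eq_prod ℝ ℝ, unifSq, Set.Icc_prod_eq]

instance : IsProbabilityMeasure unifSq := by
  rw [unifSq_eq]; infer_instance

lemma muI_le (S : Set ℝ) : muI S ≤ volume S :=
  Measure.restrict_le_self S

lemma abs_le_vol {a c s : ℝ} (ha : a ≠ 0) (hs : 0 ≤ s) :
    volume {y : ℝ | |a * y - c| ≤ s} ≤ ENNReal.ofReal (2 * s / |a|) := by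
  have hsub : {y : ℝ | |a * y - c| ≤ s} ⊆
      Icc (min ((c-s)/a) ((c+s)/a)) (max ((c-s)/a) ((c+s)/a)) := by
    intro y hy
    simp only [mem_setOf_eq, abs_le] at hy
    constructor
    · rcases lt_or_gt_of_ne ha with h | h
      · refine (min_le_right _ _).trans ?_
        rw [div_le_iff_of_neg h]; nlinarith [hy.2]
      · refine (min_le_left _ _).trans ?_
        rw [div_le_iff₀ h]; nlinarith [hy.1]
    · rcases lt_or_gt_of_ne ha with h | h
      · refine le_trans ?_ (le_max_left _ _)
        rw [le_div_iff_of_neg h]; nlinarith [hy.1]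
      · refine le_trans ?_ (le_max_right _ _)
        rw [le_div_iff₀ h]; nlinarith [hy.2]
  calc volume {y : ℝ | |a * y - c| ≤ s} ≤ volume (Icc _ _) := measure_mono hsub
    _ = ENNReal.ofReal (max ((c-s)/a) ((c+s)/a) - min ((c-s)/a) ((c+s)/a)) := Real.volume_Icc
    _ = ENNReal.ofReal (2 * s / |a|) := by
        rw [max_sub_min_eq_abs]
        congr 1
        rw [show (c+s)/a - (c-s)/a = (2*s)/a by ring, abs_div,
          abs_of_nonneg (by linarith : (0:ℝ) ≤ 2*s)]

lemma muI_ball {p r : ℝ} : muI {y : ℝ | |y - p| ≤ r} ≤ ENNReal.ofReal (2 * r) := by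
  have h1 : {y : ℝ | |y - p| ≤ r} = Icc (p - r) (p + r) := by
    ext y; simp only [mem_setOf_eq, abs_le, mem_Icc]
    constructor <;> intro h <;> exact ⟨by linarith [h.1], by linarith [h.2]⟩
  calc muI {y : ℝ | |y - p| ≤ r} ≤ volume {y : ℝ | |y - p| ≤ r} := muI_le _
    _ = ENNReal.ofReal (p + r - (p - r)) := by rw [h1, Real.volume_Icc]
    _ = ENNReal.ofReal (2 * r) := by ring_nf

lemma slice_fst {a b d s : ℝ} (ha : a ≠ 0) (hs : 0 ≤ s) :
    unifSq {R : ℝ × ℝ | |a * R.2 - b * R.1 - d| ≤ s} ≤ ENNReal.ofReal (2 * s / |a|) := by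
  have hmeas : MeasurableSet {R : ℝ × ℝ | |a * R.2 - b * R.1 - d| ≤ s} := by
    apply measurableSet_le _ measurable_const
    fun_prop
  rw [unifSq_eq, Measure.prod_apply hmeas]
  calc ∫⁻ x, muI (Prod.mk x ⁻¹' {R : ℝ × ℝ | |a * R.2 - b * R.1 - d| ≤ s}) ∂muI
      ≤ ∫⁻ _, ENNReal.ofReal (2 * s / |a|) ∂muI := by
        refine lintegral_mono fun x => ?_
        have hset : Prod.mk x ⁻¹' {R : ℝ × ℝ | |a * R.2 - b * R.1 - d| ≤ s}
            = {y : ℝ | |a * y - (b * x + d)| ≤ s} := by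
          ext y; simp only [mem_preimage, mem_setOf_eq]
          rw [show a * y - b * x - d = a * y - (b * x + d) by ring]
        rw [hset]
        exact (muI_le _).trans (abs_le_vol ha hs)
    _ = ENNReal.ofReal (2 * s / |a|) := by simp

lemma slice_snd {a b d s : ℝ} (hb : b ≠ 0) (hs : 0 ≤ s) :
    unifSq {R : ℝ × ℝ | |a * R.2 - b * R.1 - d| ≤ s} ≤ ENNReal.ofReal (2 * s / |b|) := by
  have hmeas : MeasurableSet {R : ℝ × ℝ | |a * R.2 - b * R.1 - d| ≤ s} := by
    apply measurableSet_le _ measurable_const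
    fun_prop
  rw [unifSq_eq, Measure.prod_apply_symm hmeas]
  calc ∫⁻ y, muI ((fun x => (x, y)) ⁻¹' {R : ℝ × ℝ | |a * R.2 - b * R.1 - d| ≤ s}) ∂muI
      ≤ ∫⁻ _, ENNReal.ofReal (2 * s / |b|) ∂muI := by
        refine lintegral_mono fun y => ?_
        have hset : (fun x => (x, y)) ⁻¹' {R : ℝ × ℝ | |a * R.2 - b * R.1 - d| ≤ s}
            = {x : ℝ | |b * x - (a * y - d)| ≤ s} := by
          ext x; simp only [mem_preimage, mem_setOf_eq]
          rw [show a * y - b * x - d = -(b * x - (a * y - d)) by ring, abs_neg]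
        rw [hset]
        exact (muI_le _).trans (abs_le_vol hb hs)
    _ = ENNReal.ofReal (2 * s / |b|) := by simp

lemma triArea_cont : Continuous (fun z : (ℝ×ℝ) × (ℝ×ℝ) × (ℝ×ℝ) => triArea z.1 z.2.1 z.2.2) := by
  unfold triArea; fun_prop

lemma det_prob_bound {t : ℝ} (ht : 0 ≤ t) :
    (unifSq.prod (unifSq.prod unifSq))
      {z : (ℝ×ℝ) × (ℝ×ℝ) × (ℝ×ℝ) | triArea z.1 z.2.1 z.2.2 ≤ t}
      ≤ ENNReal.ofReal (16 * t) := by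
  set S := {z : (ℝ×ℝ) × (ℝ×ℝ) × (ℝ×ℝ) | triArea z.1 z.2.1 z.2.2 ≤ t} with hS
  have hSm : MeasurableSet S := measurableSet_le triArea_cont.measurable measurable_const
  rw [Measure.prod_apply hSm]
  have key : ∀ P : ℝ×ℝ, (unifSq.prod unifSq) (Prod.mk P ⁻¹' S) ≤ ENNReal.ofReal (16 * t) := by
    intro P
    have hSlm : MeasurableSet (Prod.mk P ⁻¹' S) := measurable_prodMk_left hSm
    rw [Measure.prod_apply hSlm]
    set A : Set (ℝ×ℝ) := {Q | Q.1 ≠ P.1 ∧ |Q.2 - P.2| ≤ |Q.1 - P.1|} with hA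
    set B : Set (ℝ×ℝ) := {Q | Q.2 ≠ P.2 ∧ |Q.1 - P.1| < |Q.2 - P.2|} with hB
    set f : ℝ×ℝ → ℝ≥0∞ := fun Q => ENNReal.ofReal (4 * t / |Q.1 - P.1|) with hf
    set g : ℝ×ℝ → ℝ≥0∞ := fun Q => ENNReal.ofReal (4 * t / |Q.2 - P.2|) with hg
    have hAm : MeasurableSet A := by
      have : A = (Prod.fst ⁻¹' {P.1})ᶜ ∩ {Q : ℝ×ℝ | |Q.2 - P.2| ≤ |Q.1 - P.1|} := by
        ext Q; simp [hA]
      rw [this]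
      exact (((measurableSet_singleton P.1).preimage measurable_fst).compl).inter
        (measurableSet_le (by fun_prop) (by fun_prop))
    have hBm : MeasurableSet B := by
      have : B = (Prod.snd ⁻¹' {P.2})ᶜ ∩ {Q : ℝ×ℝ | |Q.1 - P.1| < |Q.2 - P.2|} := by
        ext Q; simp [hB]
      rw [this]
      exact (((measurableSet_singleton P.2).preimage measurable_snd).compl).inter
        (measurableSet_lt (by fun_prop) (by fun_prop))
    have hfm : Measurable f := ENNReal.measurable_ofReal.comp (by fun_prop)
    have hgm : Measurable g := ENNReal.measurable_ofReal.comp (by fun_prop)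
    have hsing : unifSq {P} = 0 := by
      rw [unifSq_eq, ← Set.singleton_prod_singleton, Measure.prod_prod]
      have h1 : muI {P.1} = 0 :=
        le_antisymm ((muI_le _).trans_eq Real.volume_singleton) (zero_le)
      simp [h1]
    have hae : ∀ᵐ Q ∂unifSq, Q ≠ P := by
      rw [ae_iff]
      simpa [not_not, Set.setOf_eq_eq_singleton] using hsing
    have hpt : ∀ Q : ℝ×ℝ, Q ≠ P →
        unifSq (Prod.mk Q ⁻¹' (Prod.mk P ⁻¹' S)) ≤ A.indicator f Q + B.indicator g Q := by
      intro Q hQ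
      have hset : Prod.mk Q ⁻¹' (Prod.mk P ⁻¹' S) =
          {R : ℝ×ℝ | |(Q.1-P.1) * R.2 - (Q.2-P.2) * R.1 -
            ((Q.1-P.1)*P.2 - (Q.2-P.2)*P.1)| ≤ 2*t} := by
        ext R
        simp only [hS, mem_preimage, mem_setOf_eq, triArea]
        rw [div_le_iff₀ (by norm_num : (0:ℝ) < 2), show t*2 = 2*t by ring,
          show (Q.1-P.1)*(R.2-P.2) - (Q.2-P.2)*(R.1-P.1) =
            (Q.1-P.1)*R.2 - (Q.2-P.2)*R.1 - ((Q.1-P.1)*P.2 - (Q.2-P.2)*P.1) by ring]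
      rw [hset]
      by_cases hcase : |Q.2 - P.2| ≤ |Q.1 - P.1|
      · have ha : Q.1 - P.1 ≠ 0 := by
          intro h0
          apply hQ
          have hb0 : |Q.2 - P.2| ≤ 0 := by simpa [h0] using hcase
          have : Q.2 - P.2 = 0 := abs_eq_zero.mp (le_antisymm hb0 (abs_nonneg _))
          exact Prod.ext (by linarith [sub_eq_zero.mp h0]) (by linarith [sub_eq_zero.mp this])
        refine le_trans ?_ le_self_add
        have hQ1 : Q.1 ≠ P.1 := fun h => ha (by rw [h]; ring)
        rw [Set.indicator_of_mem (show Q ∈ A from ⟨hQ1, hcase⟩)]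
        refine (slice_fst ha (by linarith : (0:ℝ) ≤ 2*t)).trans_eq ?_
        rw [hf, show 2*(2*t) = 4*t by ring]
      · have hblt : |Q.1 - P.1| < |Q.2 - P.2| := not_le.mp hcase
        have hb : Q.2 - P.2 ≠ 0 := by
          intro h0
          rw [h0, abs_zero] at hblt
          exact absurd hblt (not_lt.mpr (abs_nonneg _))
        refine le_trans ?_ le_add_self
        have hQ2 : Q.2 ≠ P.2 := fun h => hb (by rw [h]; ring)
        rw [Set.indicator_of_mem (show Q ∈ B from ⟨hQ2, hblt⟩)]
        refine (slice_snd hb (by linarith : (0:ℝ) ≤ 2*t)).trans_eq ?_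
        rw [hg, show 2*(2*t) = 4*t by ring]
    have h1 : ∫⁻ Q, A.indicator f Q ∂unifSq ≤ ENNReal.ofReal (8*t) := by
      rw [unifSq_eq, lintegral_prod _ ((hfm.indicator hAm).aemeasurable)]
      calc ∫⁻ q1, ∫⁻ q2, A.indicator f (q1, q2) ∂muI ∂muI
          ≤ ∫⁻ _, ENNReal.ofReal (8*t) ∂muI := by
            refine lintegral_mono fun q1 => ?_
            by_cases hq1 : q1 = P.1
            · have hz : ∀ q2, A.indicator f (q1, q2) = 0 := fun q2 =>
                Set.indicator_of_notMem (by simp [hA, hq1]) _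
              simp [hz]
            · have ha0 : |q1 - P.1| ≠ 0 := abs_ne_zero.mpr (sub_ne_zero.mpr hq1)
              have hrw : ∀ q2, A.indicator f (q1, q2) =
                  Set.indicator {y : ℝ | |y - P.2| ≤ |q1 - P.1|}
                    (fun _ => ENNReal.ofReal (4*t/|q1-P.1|)) q2 := by
                intro q2
                by_cases h2 : |q2 - P.2| ≤ |q1 - P.1|
                · rw [Set.indicator_of_mem (show (q1,q2) ∈ A from ⟨hq1, h2⟩),
                    Set.indicator_of_mem (show q2 ∈ {y : ℝ | |y - P.2| ≤ |q1 - P.1|} from h2)]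
                · rw [Set.indicator_of_notMem (fun hc => h2 hc.2),
                    Set.indicator_of_notMem (show q2 ∉ {y : ℝ | |y - P.2| ≤ |q1 - P.1|} from h2)]
              simp_rw [hrw]
              rw [lintegral_indicator_const (measurableSet_le (by fun_prop) (by fun_prop))]
              calc ENNReal.ofReal (4*t/|q1-P.1|) * muI {y : ℝ | |y - P.2| ≤ |q1 - P.1|}
                  ≤ ENNReal.ofReal (4*t/|q1-P.1|) * ENNReal.ofReal (2*|q1-P.1|) :=
                    mul_le_mul_right muI_ball _
                _ = ENNReal.ofReal (8*t) := by
                    rw [← ENNReal.ofReal_mul (div_nonneg (by linarith) (abs_nonneg _))]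
                    congr 1
                    field_simp
                    ring
        _ = ENNReal.ofReal (8*t) := by simp
    have h2 : ∫⁻ Q, B.indicator g Q ∂unifSq ≤ ENNReal.ofReal (8*t) := by
      rw [unifSq_eq, lintegral_prod_symm _ ((hgm.indicator hBm).aemeasurable)]
      calc ∫⁻ q2, ∫⁻ q1, B.indicator g (q1, q2) ∂muI ∂muI
          ≤ ∫⁻ _, ENNReal.ofReal (8*t) ∂muI := by
            refine lintegral_mono fun q2 => ?_
            by_cases hq2 : q2 = P.2
            · have hz : ∀ q1, B.indicator g (q1, q2) = 0 := fun q1 =>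
                Set.indicator_of_notMem (by simp [hB, hq2]) _
              simp [hz]
            · have hb0 : |q2 - P.2| ≠ 0 := abs_ne_zero.mpr (sub_ne_zero.mpr hq2)
              have hrw : ∀ q1, B.indicator g (q1, q2) =
                  Set.indicator {y : ℝ | |y - P.1| < |q2 - P.2|}
                    (fun _ => ENNReal.ofReal (4*t/|q2-P.2|)) q1 := by
                intro q1
                by_cases h2 : |q1 - P.1| < |q2 - P.2|
                · rw [Set.indicator_of_mem (show (q1,q2) ∈ B from ⟨hq2, h2⟩),
                    Set.indicator_of_mem (show q1 ∈ {y : ℝ | |y - P.1| < |q2 - P.2|} from h2)]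
                · rw [Set.indicator_of_notMem (fun hc => h2 hc.2),
                    Set.indicator_of_notMem (show q1 ∉ {y : ℝ | |y - P.1| < |q2 - P.2|} from h2)]
              simp_rw [hrw]
              rw [lintegral_indicator_const (measurableSet_lt (by fun_prop) (by fun_prop))]
              have hsub0 : {y : ℝ | |y - P.1| < |q2 - P.2|} ⊆ {y : ℝ | |y - P.1| ≤ |q2 - P.2|} :=
                fun y hy => le_of_lt (show |y - P.1| < |q2 - P.2| from hy)
              calc ENNReal.ofReal (4*t/|q2-P.2|) * muI {y : ℝ | |y - P.1| < |q2 - P.2|}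
                  ≤ ENNReal.ofReal (4*t/|q2-P.2|) * ENNReal.ofReal (2*|q2-P.2|) :=
                    mul_le_mul_right ((measure_mono hsub0).trans muI_ball) _
                _ = ENNReal.ofReal (8*t) := by
                    rw [← ENNReal.ofReal_mul (div_nonneg (by linarith) (abs_nonneg _))]
                    congr 1
                    field_simp
                    ring
        _ = ENNReal.ofReal (8*t) := by simp
    calc ∫⁻ Q, unifSq (Prod.mk Q ⁻¹' (Prod.mk P ⁻¹' S)) ∂unifSq
        ≤ ∫⁻ Q, (A.indicator f Q + B.indicator g Q) ∂unifSq :=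
          lintegral_mono_ae (hae.mono fun Q h => hpt Q h)
      _ = ∫⁻ Q, A.indicator f Q ∂unifSq + ∫⁻ Q, B.indicator g Q ∂unifSq :=
          lintegral_add_left (hfm.indicator hAm) _
      _ ≤ ENNReal.ofReal (8*t) + ENNReal.ofReal (8*t) := add_le_add h1 h2
      _ = ENNReal.ofReal (16*t) := by
          rw [← ENNReal.ofReal_add (by linarith) (by linarith)]
          ring_nf
  calc ∫⁻ P, (unifSq.prod unifSq) (Prod.mk P ⁻¹' S) ∂unifSq
      ≤ ∫⁻ _, ENNReal.ofReal (16*t) ∂unifSq := lintegral_mono key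
    _ = ENNReal.ofReal (16*t) := by simp


instance (n : ℕ) : IsProbabilityMeasure (μpts n) := by
  unfold μpts; infer_instance

lemma map_h {n : ℕ} (i j k : Fin n) (hij : i ≠ j) (hik : i ≠ k) (hjk : j ≠ k) :
    Measure.map (fun x : Fin n → ℝ×ℝ => fun l : Fin 3 => x (![i,j,k] l)) (μpts n)
      = Measure.pi (fun _ : Fin 3 => unifSq) := by
  classical
  symm
  apply Measure.pi_eq
  intro s hs
  have hmeas : Measurable (fun x : Fin n → ℝ×ℝ => fun l : Fin 3 => x (![i,j,k] l)) :=
    measurable_pi_lambda _ fun l => measurable_pi_apply _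
  rw [Measure.map_apply hmeas (MeasurableSet.univ_pi hs)]
  have hpre : (fun x : Fin n → ℝ×ℝ => fun l : Fin 3 => x (![i,j,k] l)) ⁻¹' (univ.pi s)
      = univ.pi (fun m => if m = i then s 0 else if m = j then s 1 else
          if m = k then s 2 else univ) := by
    ext x
    simp only [mem_preimage, mem_pi, mem_univ, true_implies]
    constructor
    · intro H m
      rcases eq_or_ne m i with rfl | hmi
      · simpa using H 0
      · rcases eq_or_ne m j with rfl | hmj
        · rw [if_neg hmi, if_pos rfl]; simpa using H 1
        · rcases eq_or_ne m k with rfl | hmk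
          · rw [if_neg hmi, if_neg hmj, if_pos rfl]; simpa using H 2
          · simp [if_neg hmi, if_neg hmj, if_neg hmk]
    · intro H l
      fin_cases l
      · have h' := H i; rw [if_pos rfl] at h'; simpa using h'
      · have h' := H j; rw [if_neg hij.symm, if_pos rfl] at h'; simpa using h'
      · have h' := H k; rw [if_neg hik.symm, if_neg hjk.symm, if_pos rfl] at h'; simpa using h'
  rw [hpre, μpts, Measure.pi_pi]
  have hone : ∀ m : Fin n, m ∈ (Finset.univ : Finset (Fin n)) →
      m ∉ ({i, j, k} : Finset (Fin n)) →
      unifSq (if m = i then s 0 else if m = j then s 1 else if m = k then s 2 else univ) = 1 := by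
    intro m _ hm
    simp only [Finset.mem_insert, Finset.mem_singleton, not_or] at hm
    rw [if_neg hm.1, if_neg hm.2.1, if_neg hm.2.2]
    exact measure_univ
  rw [← Finset.prod_subset (Finset.subset_univ ({i,j,k} : Finset (Fin n))) hone,
    Finset.prod_insert (by simp [hij, hik]), Finset.prod_insert (by simp [hjk]),
    Finset.prod_singleton, if_pos rfl, if_neg hij.symm, if_pos rfl, if_neg hik.symm,
    if_neg hjk.symm, if_pos rfl, Fin.prod_univ_three, mul_assoc]

lemma map_triple {n : ℕ} (i j k : Fin n) (hij : i ≠ j) (hik : i ≠ k) (hjk : j ≠ k) :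
    Measure.map (fun x : Fin n → ℝ×ℝ => (x i, x j, x k)) (μpts n)
      = unifSq.prod (unifSq.prod unifSq) := by
  have hg : Measurable (fun y : Fin 3 → ℝ×ℝ => (y 0, y 1, y 2)) :=
    (measurable_pi_apply 0).prodMk ((measurable_pi_apply 1).prodMk (measurable_pi_apply 2))
  have hh : Measurable (fun x : Fin n → ℝ×ℝ => fun l : Fin 3 => x (![i,j,k] l)) :=
    measurable_pi_lambda _ fun l => measurable_pi_apply _
  have hcomp : (fun x : Fin n → ℝ×ℝ => (x i, x j, x k))
      = (fun y : Fin 3 → ℝ×ℝ => (y 0, y 1, y 2)) ∘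
        (fun x => fun l : Fin 3 => x (![i,j,k] l)) := by
    funext x; simp [Function.comp]
  rw [hcomp, ← Measure.map_map hg hh, map_h i j k hij hik hjk]
  have h1 := measurePreserving_piFinSuccAbove (fun _ : Fin 3 => unifSq) 0
  have h2 := (MeasurePreserving.id unifSq).prod (measurePreserving_finTwoArrow unifSq)
  have h3 := h2.comp h1
  have hfun : (fun y : Fin 3 → ℝ×ℝ => (y 0, y 1, y 2))
      = (Prod.map id ⇑MeasurableEquiv.finTwoArrow) ∘
        ⇑(MeasurableEquiv.piFinSuccAbove (fun _ : Fin 3 => ℝ×ℝ) 0) := by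
    funext y
    simp [MeasurableEquiv.piFinSuccAbove, MeasurableEquiv.finTwoArrow, MeasurableEquiv.piFinTwo,
      Fin.removeNth, Fin.succAbove, Fin.tail]
  rw [hfun]
  exact h3.map_eq


def triples (n : ℕ) : Finset (Fin n × Fin n × Fin n) :=
  Finset.univ.filter fun p => p.1 < p.2.1 ∧ p.2.1 < p.2.2

lemma triples_nonempty {n : ℕ} (hn : 3 ≤ n) : (triples n).Nonempty := by
  refine ⟨(⟨0, by omega⟩, ⟨1, by omega⟩, ⟨2, by omega⟩),
    Finset.mem_filter.mpr ⟨Finset.mem_univ _, Fin.mk_lt_mk.mpr (by omega),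
      Fin.mk_lt_mk.mpr (by omega)⟩⟩

lemma minTriArea_eq {n : ℕ} (hn : 3 ≤ n) (x : Fin n → ℝ×ℝ) :
    minTriArea n x = (triples n).inf' (triples_nonempty hn)
      (fun p => triArea (x p.1) (x p.2.1) (x p.2.2)) := by
  rw [Finset.inf'_eq_csInf_image, minTriArea]
  congr 1
  ext a
  simp only [mem_image, Finset.mem_coe, triples, Finset.mem_filter, Finset.mem_univ,
    true_and, mem_setOf_eq]
  constructor
  · rintro ⟨i, j, k, h1, h2, rfl⟩
    exact ⟨(i,j,k), ⟨h1,h2⟩, rfl⟩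
  · rintro ⟨⟨i,j,mk⟩, ⟨h1,h2⟩, rfl⟩
    exact ⟨i, j, mk, h1, h2, rfl⟩

lemma triArea_nonneg (P Q R : ℝ×ℝ) : 0 ≤ triArea P Q R :=
  div_nonneg (abs_nonneg _) (by norm_num)

lemma minTriArea_nonneg {n : ℕ} (hn : 3 ≤ n) (x : Fin n → ℝ×ℝ) : 0 ≤ minTriArea n x := by
  rw [minTriArea_eq hn]
  exact Finset.le_inf' _ _ fun p _ => triArea_nonneg _ _ _

lemma triArea_le_one {P Q R : ℝ×ℝ} (hP : P ∈ Icc ((0,0):ℝ×ℝ) (1,1))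
    (hQ : Q ∈ Icc ((0,0):ℝ×ℝ) (1,1)) (hR : R ∈ Icc ((0,0):ℝ×ℝ) (1,1)) :
    triArea P Q R ≤ 1 := by
  rw [Set.mem_Icc, Prod.le_def, Prod.le_def] at hP hQ hR
  obtain ⟨⟨hP1, hP2⟩, hP1', hP2'⟩ := hP
  obtain ⟨⟨hQ1, hQ2⟩, hQ1', hQ2'⟩ := hQ
  obtain ⟨⟨hR1, hR2⟩, hR1', hR2'⟩ := hR
  simp only at hP1 hP2 hP1' hP2' hQ1 hQ2 hQ1' hQ2' hR1 hR2 hR1' hR2'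
  rw [triArea, div_le_one (by norm_num)]
  have h1 : |Q.1 - P.1| ≤ 1 := abs_le.mpr ⟨by linarith, by linarith⟩
  have h2 : |R.2 - P.2| ≤ 1 := abs_le.mpr ⟨by linarith, by linarith⟩
  have h3 : |Q.2 - P.2| ≤ 1 := abs_le.mpr ⟨by linarith, by linarith⟩
  have h4 : |R.1 - P.1| ≤ 1 := abs_le.mpr ⟨by linarith, by linarith⟩
  calc |(Q.1-P.1)*(R.2-P.2) - (Q.2-P.2)*(R.1-P.1)|
      ≤ |(Q.1-P.1)*(R.2-P.2)| + |(Q.2-P.2)*(R.1-P.1)| := abs_sub _ _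
    _ ≤ 1 + 1 := by
        rw [abs_mul, abs_mul]
        exact add_le_add (mul_le_one₀ h1 (abs_nonneg _) h2) (mul_le_one₀ h3 (abs_nonneg _) h4)
    _ = 2 := by norm_num

lemma minTriArea_le_one {n : ℕ} (hn : 3 ≤ n) {x : Fin n → ℝ×ℝ}
    (hx : ∀ l, x l ∈ Icc ((0,0):ℝ×ℝ) (1,1)) : minTriArea n x ≤ 1 := by
  rw [minTriArea_eq hn]
  obtain ⟨p, hp⟩ := triples_nonempty hn
  exact (Finset.inf'_le _ hp).trans (triArea_le_one (hx _) (hx _) (hx _))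

set_option maxHeartbeats 1000000 in
lemma minTriArea_measurable {n : ℕ} (hn : 3 ≤ n) : Measurable (minTriArea n) := by
  have hrw : minTriArea n = fun x => (triples n).inf' (triples_nonempty hn)
      (fun p => triArea (x p.1) (x p.2.1) (x p.2.2)) := funext fun x => minTriArea_eq hn x
  rw [hrw]
  have hg : ∀ p : Fin n × Fin n × Fin n,
      Continuous (fun x : Fin n → ℝ×ℝ => triArea (x p.1) (x p.2.1) (x p.2.2)) := fun p => by
    have := triArea_cont.comp (Continuous.prodMk (continuous_apply (A := fun _ => ℝ×ℝ) p.1)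
      ((continuous_apply (A := fun _ => ℝ×ℝ) p.2.1).prodMk (continuous_apply (A := fun _ => ℝ×ℝ) p.2.2)))
    exact this
  have hcont : Continuous (fun x : Fin n → ℝ×ℝ => (triples n).inf' (triples_nonempty hn)
      (fun p => triArea (x p.1) (x p.2.1) (x p.2.2))) :=
    Continuous.finset_inf'_apply (triples_nonempty hn) fun p _ => hg p
  exact hcont.measurable

theorem expected_min_triangle_area_lower_bound :
    ∃ c : ℝ, 0 < c ∧ ∃ N : ℕ, ∀ n : ℕ, N ≤ n →
      c / (n : ℝ) ^ 3 < ∫ x, minTriArea n x ∂(μpts n) := by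
  refine ⟨1/65, by norm_num, 3, fun n hn => ?_⟩
  have hnpos : 0 < n := by omega
  have hn0 : (0:ℝ) < (n:ℝ)^3 := by positivity
  set t₀ : ℝ := 1/(32*(n:ℝ)^3) with ht₀def
  have ht₀ : 0 < t₀ := by positivity
  set Gset := {x : Fin n → ℝ×ℝ | t₀ ≤ minTriArea n x} with hGdef
  have hmeasmin : Measurable (minTriArea n) := minTriArea_measurable hn
  have hGm : MeasurableSet Gset := measurableSet_le measurable_const hmeasmin
  have hbadsub : {x : Fin n → ℝ×ℝ | minTriArea n x < t₀} ⊆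
      ⋃ p ∈ triples n, {x : Fin n → ℝ×ℝ | triArea (x p.1) (x p.2.1) (x p.2.2) ≤ t₀} := by
    intro x hx
    rw [mem_setOf_eq, minTriArea_eq hn] at hx
    obtain ⟨p, hp, hplt⟩ := (Finset.inf'_lt_iff _).mp hx
    exact mem_iUnion₂.mpr ⟨p, hp, le_of_lt hplt⟩
  have hmap : ∀ p ∈ triples n,
      μpts n {x : Fin n → ℝ×ℝ | triArea (x p.1) (x p.2.1) (x p.2.2) ≤ t₀}
        ≤ ENNReal.ofReal (16 * t₀) := by
    intro p hp
    simp only [triples, Finset.mem_filter] at hp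
    have h12 : p.1 ≠ p.2.1 := ne_of_lt hp.2.1
    have h13 : p.1 ≠ p.2.2 := ne_of_lt (hp.2.1.trans hp.2.2)
    have h23 : p.2.1 ≠ p.2.2 := ne_of_lt hp.2.2
    have hfm : Measurable (fun x : Fin n → ℝ×ℝ => (x p.1, x p.2.1, x p.2.2)) :=
      (measurable_pi_apply _).prodMk ((measurable_pi_apply _).prodMk (measurable_pi_apply _))
    have hSm : MeasurableSet {z : (ℝ×ℝ) × (ℝ×ℝ) × (ℝ×ℝ) | triArea z.1 z.2.1 z.2.2 ≤ t₀} :=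
      measurableSet_le triArea_cont.measurable measurable_const
    have hpre : {x : Fin n → ℝ×ℝ | triArea (x p.1) (x p.2.1) (x p.2.2) ≤ t₀}
        = (fun x : Fin n → ℝ×ℝ => (x p.1, x p.2.1, x p.2.2)) ⁻¹'
          {z : (ℝ×ℝ) × (ℝ×ℝ) × (ℝ×ℝ) | triArea z.1 z.2.1 z.2.2 ≤ t₀} := rfl
    rw [hpre, ← Measure.map_apply hfm hSm, map_triple _ _ _ h12 h13 h23]
    exact det_prob_bound ht₀.le
  have hcard : (triples n).card ≤ n^3 := by
    calc (triples n).card ≤ (Finset.univ : Finset (Fin n × Fin n × Fin n)).card :=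
        Finset.card_filter_le _ _
      _ = n^3 := by simp [Finset.card_univ]; ring
  have hbad : μpts n {x | minTriArea n x < t₀} ≤ ENNReal.ofReal (1/2) := by
    calc μpts n {x | minTriArea n x < t₀}
        ≤ μpts n (⋃ p ∈ triples n,
            {x : Fin n → ℝ×ℝ | triArea (x p.1) (x p.2.1) (x p.2.2) ≤ t₀}) :=
          measure_mono hbadsub
      _ ≤ ∑ p ∈ triples n,
            μpts n {x : Fin n → ℝ×ℝ | triArea (x p.1) (x p.2.1) (x p.2.2) ≤ t₀} :=
          measure_biUnion_finset_le _ _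
      _ ≤ ∑ _p ∈ triples n, ENNReal.ofReal (16*t₀) := Finset.sum_le_sum hmap
      _ = ((triples n).card : ℝ≥0∞) * ENNReal.ofReal (16*t₀) := by
          rw [Finset.sum_const, nsmul_eq_mul]
      _ ≤ ((n^3 : ℕ) : ℝ≥0∞) * ENNReal.ofReal (16*t₀) := by
          have hcc : ((triples n).card : ℝ≥0∞) ≤ ((n^3 : ℕ) : ℝ≥0∞) := by
            exact_mod_cast hcard
          exact mul_le_mul_left hcc _
      _ = ENNReal.ofReal (1/2) := by
          rw [← ENNReal.ofReal_natCast, ← ENNReal.ofReal_mul (by positivity)]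
          congr 1
          have hc : ((n^3 : ℕ) : ℝ) = (n:ℝ)^3 := by push_cast; ring
          rw [hc, ht₀def]
          field_simp
          try ring
  have hG : ENNReal.ofReal (1/2) ≤ μpts n Gset := by
    have hcompl : Gset = {x : Fin n → ℝ×ℝ | minTriArea n x < t₀}ᶜ := by
      ext x; simp [hGdef, not_lt]
    have hbm : MeasurableSet {x : Fin n → ℝ×ℝ | minTriArea n x < t₀} :=
      measurableSet_lt hmeasmin measurable_const
    rw [hcompl, measure_compl hbm (measure_ne_top _ _), measure_univ]
    have h2 : ENNReal.ofReal (1/2) = 1 - ENNReal.ofReal (1/2) := by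
      rw [← ENNReal.ofReal_one, ← ENNReal.ofReal_sub _ (by norm_num)]
      norm_num
    rw [h2]
    exact tsub_le_tsub_left hbad 1
  have haebox : ∀ᵐ x ∂ μpts n, ∀ l, x l ∈ Icc ((0,0):ℝ×ℝ) (1,1) := by
    have hBm : MeasurableSet (univ.pi fun _ : Fin n => Icc ((0,0):ℝ×ℝ) (1,1)) :=
      MeasurableSet.univ_pi fun _ => measurableSet_Icc
    have hB1 : μpts n (univ.pi fun _ : Fin n => Icc ((0,0):ℝ×ℝ) (1,1)) = 1 := by
      rw [μpts, Measure.pi_pi]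
      have hbox : unifSq (Icc ((0,0):ℝ×ℝ) (1,1)) = 1 := by
        have h := measure_univ (μ := unifSq)
        rw [unifSq, Measure.restrict_apply_univ] at h
        rw [unifSq, Measure.restrict_apply_self]
        exact h
      have hbox' : unifSq (Icc (0:ℝ×ℝ) 1) = 1 := by
        rw [← Prod.mk_zero_zero, ← Prod.mk_one_one]; exact hbox
      simp [hbox', hbox]
    rw [ae_iff]
    have hcset : {x : Fin n → ℝ×ℝ | ¬ ∀ l, x l ∈ Icc ((0,0):ℝ×ℝ) (1,1)}
        = (univ.pi fun _ : Fin n => Icc ((0,0):ℝ×ℝ) (1,1))ᶜ := by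
      ext x
      simp only [mem_setOf_eq, mem_compl_iff, Set.mem_pi, mem_univ, true_implies]
    rw [hcset, measure_compl hBm (measure_ne_top _ _), measure_univ, hB1, tsub_self]
  have hint : Integrable (minTriArea n) (μpts n) := by
    refine Integrable.mono' (integrable_const 1) hmeasmin.aestronglyMeasurable ?_
    filter_upwards [haebox] with x hx
    rw [Real.norm_eq_abs, abs_of_nonneg (minTriArea_nonneg hn x)]
    exact minTriArea_le_one hn hx
  have hlow : ∀ x, Gset.indicator (fun _ => t₀) x ≤ minTriArea n x := by
    intro x
    by_cases hx : x ∈ Gset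
    · rw [Set.indicator_of_mem hx]; exact hx
    · rw [Set.indicator_of_notMem hx]; exact minTriArea_nonneg hn x
  have hI : ∫ x, Gset.indicator (fun _ => t₀) x ∂(μpts n) ≤ ∫ x, minTriArea n x ∂(μpts n) :=
    integral_mono ((integrable_const t₀).indicator hGm) hint hlow
  rw [integral_indicator_const _ hGm] at hI
  have htr : 1/2 ≤ (μpts n Gset).toReal := by
    have hmono := ENNReal.toReal_mono (measure_ne_top _ _) hG
    rwa [ENNReal.toReal_ofReal (by norm_num)] at hmono
  have hfin : 1/65 / (n:ℝ)^3 < (μpts n Gset).toReal • t₀ := by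
    rw [smul_eq_mul]
    have h1 : (1:ℝ)/2 * t₀ ≤ (μpts n Gset).toReal * t₀ :=
      mul_le_mul_of_nonneg_right htr ht₀.le
    refine lt_of_lt_of_le ?_ h1
    rw [ht₀def]
    have heq : (1:ℝ)/2 * (1/(32*(n:ℝ)^3)) = 1/(64*(n:ℝ)^3) := by ring
    have heq2 : (1:ℝ)/65 / (n:ℝ)^3 = 1/(65*(n:ℝ)^3) := by ring
    rw [heq, heq2]
    apply one_div_lt_one_div_of_lt (by positivity)
    nlinarith
  exact lt_of_lt_of_le hfin hI
end

section
/- Let α be a type and U : List Bool → Option α any function (a fixed decoder). Let S be a finite set of elements of α with cardinality m ≥ 1, and let δ be a positive integer with δ ≤ ⌊log₂ m⌋. Then the number of elements x ∈ S such that no binary string p with length(p) < ⌊log₂ m⌋ − δ satisfies U(p) = some x is at least m·(1 − 2^{−δ}) + 1. -/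
/-- Binary encoding of a list of booleans with an implicit leading 1. -/
def enc : List Bool → ℕ
  | [] => 1
  | b :: l => 2 * enc l + (if b then 1 else 0)

lemma enc_pos (l : List Bool) : 1 ≤ enc l := by
  induction l with
  | nil => simp [enc]
  | cons b l ih => cases b <;> simp [enc] <;> omega

lemma enc_lt (l : List Bool) : enc l < 2 ^ (l.length + 1) := by
  induction l with
  | nil => simp [enc]
  | cons b l ih =>
    cases b <;> simp [enc, List.length_cons, pow_succ] <;> omega

lemma enc_inj : Function.Injective enc := by
  intro l
  induction l with
  | nil =>
    intro l' h
    cases l' with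
    | nil => rfl
    | cons b l' =>
      exfalso; have := enc_pos l'
      cases b <;> simp [enc] at h <;> omega
  | cons b l ih =>
    intro l' h
    cases l' with
    | nil =>
      exfalso; have := enc_pos l
      cases b <;> simp [enc] at h <;> omega
    | cons b' l' =>
      cases b <;> cases b' <;> simp [enc] at h
      · rw [ih h]
      · omega
      · omega
      · rw [ih h]

open Classical in
/-- Counting incompressible elements: for any decoder `U`, any finite set `S` of
cardinality `m ≥ 1` and any positive integer `δ ≤ ⌊log₂ m⌋`, at least
`m·(1 − 2^{−δ}) + 1` elements of `S` are not the output of `U` on any binary string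
of length less than `⌊log₂ m⌋ − δ`. -/
theorem incompressibility {α : Type*} (U : List Bool → Option α) (S : Finset α) (m : ℕ)
    (hSm : S.card = m) (hm : 1 ≤ m) (δ : ℕ) (hδ : 0 < δ) (hδm : δ ≤ Nat.log 2 m) :
    (m : ℝ) * (1 - 1 / 2 ^ δ) + 1 ≤
      ((S.filter fun x =>
        ¬ ∃ p : List Bool, p.length < Nat.log 2 m - δ ∧ U p = some x).card : ℝ) := by
  classical
  set t := Nat.log 2 m - δ with ht
  set C := S.filter (fun x => ∃ p : List Bool, p.length < t ∧ U p = some x) with hCdef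
  have hCcard : C.card ≤ 2 ^ t - 1 := by
    have key : ∀ x ∈ C, ∃ p : List Bool, p.length < t ∧ U p = some x :=
      fun x hx => (Finset.mem_filter.mp hx).2
    choose! f hf1 hf2 using key
    have hle : C.card ≤ (Finset.range (2 ^ t - 1)).card :=
      Finset.card_le_card_of_injOn (fun x => enc (f x) - 1)
      (fun x hx => by
        simp only [Finset.mem_coe, Finset.mem_range]
        have h1 := enc_lt (f x)
        have h2 := enc_pos (f x)
        have h3 : 2 ^ ((f x).length + 1) ≤ 2 ^ t :=
          Nat.pow_le_pow_right (by norm_num) (hf1 x hx)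
        omega)
      (fun x hx y hy h => by
        simp only at h
        have h1 := enc_pos (f x)
        have h2 := enc_pos (f y)
        have henc : enc (f x) = enc (f y) := by omega
        have hf : f x = f y := enc_inj henc
        have := (hf2 x hx).symm.trans (hf ▸ hf2 y hy)
        exact Option.some.inj this)
    simpa using hle
  have hsum : C.card + (S.filter fun x =>
      ¬ ∃ p : List Bool, p.length < t ∧ U p = some x).card = m := by
    rw [hCdef, Finset.card_filter_add_card_filter_not, hSm]
  have hN : 2 ^ t * 2 ^ δ ≤ m := by
    rw [← pow_add]
    have : t + δ = Nat.log 2 m := by omega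
    rw [this]
    exact Nat.pow_log_le_self 2 (by omega)
  have h2t : (2 : ℝ) ^ t ≤ (m : ℝ) / 2 ^ δ := by
    rw [le_div_iff₀ (by positivity)]
    exact_mod_cast hN
  have h1 : (1 : ℕ) ≤ 2 ^ t := Nat.one_le_two_pow
  have hCcast : (C.card : ℝ) ≤ (2 : ℝ) ^ t - 1 := by
    have := (Nat.cast_le (α := ℝ)).mpr hCcard
    push_cast [h1] at this
    exact this
  have hsumcast : (C.card : ℝ) + ((S.filter fun x =>
      ¬ ∃ p : List Bool, p.length < t ∧ U p = some x).card : ℝ) = m := by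
    exact_mod_cast hsum
  have hring : (m : ℝ) * (1 - 1 / 2 ^ δ) = m - m / 2 ^ δ := by ring
  linarith
end

section
/- For all integers n ≥ 3 and K ≥ 2, the number of n-element subsets of the K×K grid that contain three distinct collinear points is at most binom(K², n−1) · binom(n−1, 2) · K. -/
/-- The `K × K` grid `{0, 1, …, K−1}² ⊆ ℤ²`. -/
def grid (K : ℕ) : Finset (ℤ × ℤ) :=
  (Finset.range K ×ˢ Finset.range K).image fun p => ((p.1 : ℤ), (p.2 : ℤ))

/-- A grid point viewed as a point of `ℝ²`. -/
def toR (p : ℤ × ℤ) : ℝ × ℝ := ((p.1 : ℝ), (p.2 : ℝ))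

lemma mem_grid {K : ℕ} {p : ℤ × ℤ} :
    p ∈ grid K ↔ 0 ≤ p.1 ∧ p.1 < K ∧ 0 ≤ p.2 ∧ p.2 < K := by
  constructor
  · rintro hp
    simp only [grid, Finset.mem_image, Finset.mem_product, Finset.mem_range] at hp
    obtain ⟨⟨a, b⟩, ⟨ha, hb⟩, rfl⟩ := hp
    exact ⟨Int.ofNat_nonneg a, by show (a:ℤ) < K; exact_mod_cast ha, Int.ofNat_nonneg b,
      by show (b:ℤ) < K; exact_mod_cast hb⟩
  · rintro ⟨h1, h2, h3, h4⟩
    simp only [grid, Finset.mem_image, Finset.mem_product, Finset.mem_range]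
    exact ⟨(p.1.toNat, p.2.toNat), ⟨by omega, by omega⟩, by simp [Int.toNat_of_nonneg h1, Int.toNat_of_nonneg h3]⟩

lemma card_grid (K : ℕ) : (grid K).card = K ^ 2 := by
  rw [grid, Finset.card_image_of_injective, Finset.card_product, Finset.card_range, sq]
  intro a b h
  simp only [Prod.ext_iff] at h ⊢
  exact ⟨by exact_mod_cast h.1, by exact_mod_cast h.2⟩

lemma cross_eq_zero {P Q R : ℤ × ℤ}
    (h : Collinear ℝ ({toR P, toR Q, toR R} : Set (ℝ × ℝ))) :
    (Q.1 - P.1) * (R.2 - P.2) = (Q.2 - P.2) * (R.1 - P.1) := by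
  rw [collinear_iff_of_mem (Set.mem_insert _ _)] at h
  obtain ⟨v, hv⟩ := h
  obtain ⟨r, hr⟩ := hv (toR Q) (by simp)
  obtain ⟨s, hs⟩ := hv (toR R) (by simp)
  have hQ1 : (Q.1 : ℝ) = r * v.1 + P.1 := by
    have := congrArg Prod.fst hr; simpa [toR] using this
  have hQ2 : (Q.2 : ℝ) = r * v.2 + P.2 := by
    have := congrArg Prod.snd hr; simpa [toR] using this
  have hR1 : (R.1 : ℝ) = s * v.1 + P.1 := by
    have := congrArg Prod.fst hs; simpa [toR] using this
  have hR2 : (R.2 : ℝ) = s * v.2 + P.2 := by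
    have := congrArg Prod.snd hs; simpa [toR] using this
  have : ((Q.1 - P.1) * (R.2 - P.2) : ℝ) = ((Q.2 - P.2) * (R.1 - P.1) : ℝ) := by
    rw [hQ1, hQ2, hR1, hR2]; ring
  exact_mod_cast this

open Classical in
lemma card_line_le {K : ℕ} {P Q : ℤ × ℤ} (hPQ : P ≠ Q) :
    ((grid K).filter fun R =>
      Collinear ℝ ({toR P, toR Q, toR R} : Set (ℝ × ℝ))).card ≤ K := by
  by_cases hdx : Q.1 = P.1
  · -- vertical line; R.1 = P.1 forced, inject via R.2
    have : ((grid K).filter fun R =>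
        Collinear ℝ ({toR P, toR Q, toR R} : Set (ℝ × ℝ))).card ≤
        ((Finset.range K).image (fun i : ℕ => (i : ℤ))).card := by
      apply Finset.card_le_card_of_injOn (fun R : ℤ × ℤ => R.2)
      · intro R hR
        simp only [Finset.mem_coe, Finset.mem_filter] at hR
        have := (mem_grid.1 hR.1).2.2
        simp only [Finset.mem_coe, Finset.mem_image, Finset.mem_range]
        exact ⟨R.2.toNat, by omega, by omega⟩
      · intro a ha b hb hab
        simp only [Finset.mem_coe, Finset.mem_filter] at ha hb
        have h1 := cross_eq_zero ha.2
        have h2 := cross_eq_zero hb.2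
        have hdy : Q.2 ≠ P.2 := fun h => hPQ (Prod.ext hdx.symm h.symm ▸ rfl)
        have ha1 : a.1 = P.1 := by
          rw [hdx] at h1; simp at h1; omega
        have hb1 : b.1 = P.1 := by
          rw [hdx] at h2; simp at h2; omega
        exact Prod.ext (ha1.trans hb1.symm) hab
    calc _ ≤ _ := this
      _ ≤ K := by rw [Finset.card_image_of_injective _ (fun a b h => by exact_mod_cast h)]; simp
  · have : ((grid K).filter fun R =>
        Collinear ℝ ({toR P, toR Q, toR R} : Set (ℝ × ℝ))).card ≤
        ((Finset.range K).image (fun i : ℕ => (i : ℤ))).card := by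
      apply Finset.card_le_card_of_injOn (fun R : ℤ × ℤ => R.1)
      · intro R hR
        simp only [Finset.mem_coe, Finset.mem_filter] at hR
        have := (mem_grid.1 hR.1).2.1
        have := (mem_grid.1 hR.1).1
        simp only [Finset.mem_coe, Finset.mem_image, Finset.mem_range]
        exact ⟨R.1.toNat, by omega, by omega⟩
      · intro a ha b hb hab
        simp only [Finset.mem_coe, Finset.mem_filter] at ha hb
        have h1 := cross_eq_zero ha.2
        have h2 := cross_eq_zero hb.2
        have hdx' : Q.1 - P.1 ≠ 0 := by omega
        have hab' : a.1 = b.1 := hab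
        have : (Q.1 - P.1) * (a.2 - P.2) = (Q.1 - P.1) * (b.2 - P.2) := by
          rw [h1, h2, hab']
        have := mul_left_cancel₀ hdx' this
        exact Prod.ext hab (by omega)
    calc _ ≤ _ := this
      _ ≤ K := by rw [Finset.card_image_of_injective _ (fun a b h => by exact_mod_cast h)]; simp

open Classical in
noncomputable def lineSet (K : ℕ) (pq : Finset (ℤ × ℤ)) : Finset (ℤ × ℤ) :=
  (grid K).filter fun R => Collinear ℝ (((insert R pq).image toR : Finset (ℝ × ℝ)) : Set (ℝ × ℝ))

lemma coe_image_insert (P Q R : ℤ × ℤ) :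
    (((insert R ({P, Q} : Finset (ℤ × ℤ))).image toR : Finset (ℝ × ℝ)) : Set (ℝ × ℝ))
      = ({toR P, toR Q, toR R} : Set (ℝ × ℝ)) := by
  ext x
  simp only [Finset.coe_image, Finset.coe_insert, Set.mem_image, Set.mem_insert_iff,
    Finset.coe_singleton, Set.mem_singleton_iff]
  constructor
  · rintro ⟨y, (rfl | rfl | rfl), rfl⟩ <;> tauto
  · rintro (rfl | rfl | rfl) <;> [exact ⟨P, by tauto⟩; exact ⟨Q, by tauto⟩; exact ⟨R, by tauto⟩]

open Classical in
lemma card_lineSet_le {K : ℕ} {P Q : ℤ × ℤ} (hPQ : P ≠ Q) :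
    (lineSet K {P, Q}).card ≤ K := by
  have : lineSet K {P, Q} =
      (grid K).filter fun R => Collinear ℝ ({toR P, toR Q, toR R} : Set (ℝ × ℝ)) := by
    apply Finset.filter_congr
    intro R _
    rw [coe_image_insert]
  rw [this]
  exact card_line_le hPQ

open Classical in
theorem count_collinear_subsets_le (n K : ℕ) (hn : 3 ≤ n) (hK : 2 ≤ K) :
    (((grid K).powersetCard n).filter fun S => ∃ P ∈ S, ∃ Q ∈ S, ∃ R ∈ S,
        P ≠ Q ∧ P ≠ R ∧ Q ≠ R ∧
        Collinear ℝ ({toR P, toR Q, toR R} : Set (ℝ × ℝ))).card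
      ≤ (K ^ 2).choose (n - 1) * (n - 1).choose 2 * K := by
  classical
  set Bad : Finset (ℤ × ℤ) → Prop := fun S =>
    ∃ t : (ℤ × ℤ) × (ℤ × ℤ) × (ℤ × ℤ), t.1 ∈ S ∧ t.2.1 ∈ S ∧ t.2.2 ∈ S ∧
      t.1 ≠ t.2.1 ∧ t.1 ≠ t.2.2 ∧ t.2.1 ≠ t.2.2 ∧
      Collinear ℝ ({toR t.1, toR t.2.1, toR t.2.2} : Set (ℝ × ℝ)) with hBad
  let w : Finset (ℤ × ℤ) → (ℤ × ℤ) × (ℤ × ℤ) × (ℤ × ℤ) := fun S =>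
    if h : Bad S then h.choose else default
  set B : Finset (Σ _ : Finset (ℤ × ℤ), Σ _ : Finset (ℤ × ℤ), ℤ × ℤ) :=
    ((grid K).powersetCard (n - 1)).sigma fun T =>
      (T.powersetCard 2).sigma fun pq => lineSet K pq with hB
  have key : (((grid K).powersetCard n).filter fun S => ∃ P ∈ S, ∃ Q ∈ S, ∃ R ∈ S,
        P ≠ Q ∧ P ≠ R ∧ Q ≠ R ∧
        Collinear ℝ ({toR P, toR Q, toR R} : Set (ℝ × ℝ))).card ≤ B.card := by
    apply Finset.card_le_card_of_injOn
      (fun S => ⟨S.erase (w S).2.2, ⟨{(w S).1, (w S).2.1}, (w S).2.2⟩⟩)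
    · intro S hS
      rw [Finset.mem_coe, Finset.mem_filter] at hS
      obtain ⟨hS1, P, hP, Q, hQ, R, hR, hPQ, hPR, hQR, hcol⟩ := hS
      obtain ⟨hSg, hScard⟩ := Finset.mem_powersetCard.mp hS1
      have hbad : Bad S := ⟨⟨P, Q, R⟩, hP, hQ, hR, hPQ, hPR, hQR, hcol⟩
      have hw : w S = hbad.choose := dif_pos hbad
      obtain ⟨h1, h2, h3, h4, h5, h6, h7⟩ := hbad.choose_spec
      rw [Finset.mem_coe, Finset.mem_sigma]
      beta_reduce
      constructor
      · rw [Finset.mem_powersetCard]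
        refine ⟨(Finset.erase_subset _ _).trans hSg, ?_⟩
        rw [Finset.card_erase_of_mem (by rw [hw]; exact h3), hScard]
      rw [Finset.mem_sigma]
      constructor
      · rw [Finset.mem_powersetCard]
        constructor
        · intro x hx
          rw [hw] at hx ⊢
          rcases Finset.mem_insert.mp hx with rfl | hx
          · exact Finset.mem_erase.mpr ⟨h5, h1⟩
          · rw [Finset.mem_singleton] at hx
            subst hx
            exact Finset.mem_erase.mpr ⟨h6, h2⟩
        · rw [hw]
          exact Finset.card_pair h4
      · rw [hw]
        rw [lineSet, Finset.mem_filter]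
        exact ⟨hSg h3, by rw [coe_image_insert]; exact h7⟩
    · intro S₁ hS₁ S₂ hS₂ hf
      have hT : S₁.erase (w S₁).2.2 = S₂.erase (w S₂).2.2 := congrArg (fun x => x.1) hf
      have hR : (w S₁).2.2 = (w S₂).2.2 := congrArg (fun x => x.2.2) hf
      have hbad₁ : Bad S₁ := by
        rw [Finset.mem_coe, Finset.mem_filter] at hS₁
        obtain ⟨_, P, hP, Q, hQ, R, hRm, hPQ, hPR, hQR, hcol⟩ := hS₁
        exact ⟨⟨P, Q, R⟩, hP, hQ, hRm, hPQ, hPR, hQR, hcol⟩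
      have hbad₂ : Bad S₂ := by
        rw [Finset.mem_coe, Finset.mem_filter] at hS₂
        obtain ⟨_, P, hP, Q, hQ, R, hRm, hPQ, hPR, hQR, hcol⟩ := hS₂
        exact ⟨⟨P, Q, R⟩, hP, hQ, hRm, hPQ, hPR, hQR, hcol⟩
      have hm₁ : (w S₁).2.2 ∈ S₁ := by
        rw [show w S₁ = hbad₁.choose from dif_pos hbad₁]
        exact hbad₁.choose_spec.2.2.1
      have hm₂ : (w S₂).2.2 ∈ S₂ := by
        rw [show w S₂ = hbad₂.choose from dif_pos hbad₂]
        exact hbad₂.choose_spec.2.2.1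
      calc S₁ = insert (w S₁).2.2 (S₁.erase (w S₁).2.2) := (Finset.insert_erase hm₁).symm
        _ = insert (w S₂).2.2 (S₂.erase (w S₂).2.2) := by rw [hT, hR]
        _ = S₂ := Finset.insert_erase hm₂
  refine key.trans ?_
  rw [hB, Finset.card_sigma]
  have step : ∀ T ∈ (grid K).powersetCard (n - 1),
      ((T.powersetCard 2).sigma fun pq => lineSet K pq).card ≤ (n - 1).choose 2 * K := by
    intro T hT
    obtain ⟨hTg, hTcard⟩ := Finset.mem_powersetCard.mp hT
    rw [Finset.card_sigma]
    calc ∑ pq ∈ T.powersetCard 2, (lineSet K pq).card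
        ≤ ∑ _pq ∈ T.powersetCard 2, K := by
          apply Finset.sum_le_sum
          intro pq hpq
          obtain ⟨hpqT, hpqcard⟩ := Finset.mem_powersetCard.mp hpq
          obtain ⟨P, Q, hPQ, rfl⟩ := Finset.card_eq_two.mp hpqcard
          exact card_lineSet_le hPQ
      _ = (n - 1).choose 2 * K := by
          rw [Finset.sum_const, smul_eq_mul, Finset.card_powersetCard, hTcard]
  calc ∑ T ∈ (grid K).powersetCard (n - 1),
        ((T.powersetCard 2).sigma fun pq => lineSet K pq).card
      ≤ ∑ _T ∈ (grid K).powersetCard (n - 1), (n - 1).choose 2 * K :=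
        Finset.sum_le_sum step
    _ = (K ^ 2).choose (n - 1) * (n - 1).choose 2 * K := by
        rw [Finset.sum_const, smul_eq_mul, Finset.card_powersetCard, card_grid, mul_assoc]
end
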